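/- For x, y ∈ Z[ω], the quantity Re(√2·x·y*) belongs to Z[ω] and satisfies gde(Re(√2·x·y*), √2) ≥ ⌊(gde(|x|², √2) + gde(|y|², √2))/2⌋. -/

import Mathlib

noncomputable section

open Complex

/-- The eighth root of unity ω = e^{iπ/4}. -/
def omg : ℂ := Complex.exp (Real.pi * Complex.I / 4)

/-- √2 as a complex number. -/
def rt2 : ℂ := (Real.sqrt 2 : ℝ)

/-- Membership in the ring Z[ω] = {a + bω + cω² + dω³ : a,b,c,d ∈ ℤ}. -/
def Zomega (z : ℂ) : Prop :=
  ∃ a b c d : ℤ, z = a + b * omg + c * omg ^ 2 + d * omg ^ 3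

/-- Membership in the ring Z[1/√2, i] = {u/(√2)^n : u ∈ Z[ω], n ∈ ℕ}. -/
def ZRoot2i (z : ℂ) : Prop :=
  ∃ u : ℂ, Zomega u ∧ ∃ n : ℕ, z = u / rt2 ^ n

/-- `b` divides `z` within the ring Z[ω]. -/
def ZDvd (b z : ℂ) : Prop := ∃ q : ℂ, Zomega q ∧ z = b * q

/-- `k` is the greatest dividing exponent of base `b` with respect to `z`:
`b^k` divides `z` in Z[ω], while `b^(k+1)` does not. -/
def IsGde (b z : ℂ) (k : ℕ) : Prop := ZDvd (b ^ k) z ∧ ¬ ZDvd (b ^ (k + 1)) z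

/-- `k` is the smallest denominator exponent of base √2 with respect to `z`:
the smallest integer `k` such that `z·(√2)^k ∈ Z[ω]`. -/
def IsSde (z : ℂ) (k : ℤ) : Prop :=
  Zomega (z * rt2 ^ k) ∧ ∀ j : ℤ, Zomega (z * rt2 ^ j) → k ≤ j

lemma rt2_sq : rt2 ^ 2 = 2 := by
  rw [rt2, ← Complex.ofReal_pow, Real.sq_sqrt (by norm_num : (2:ℝ) ≥ 0)]
  norm_num

lemma rt2_ne : rt2 ≠ 0 := by
  rw [rt2]
  simp [Real.sqrt_eq_zero']

lemma homg : omg = rt2 / 2 * (1 + I) := by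
  have h : omg = Complex.exp ((Real.pi/4 : ℝ) * I) := by
    rw [omg]; push_cast; ring_nf
  apply Complex.ext
  · rw [h, Complex.exp_ofReal_mul_I_re, Real.cos_pi_div_four]
    simp [rt2]
  · rw [h, Complex.exp_ofReal_mul_I_im, Real.sin_pi_div_four]
    simp [rt2]

lemma homg2 : omg ^ 2 = I := by
  rw [homg]
  have := Complex.I_sq
  have h2 := rt2_sq
  ring_nf
  linear_combination (1/4 + I/2 + I^2/4) * h2 + (1/2 : ℂ) * this

lemma h4 : omg ^ 4 = -1 := by
  have : omg ^ 4 = (omg ^ 2) ^ 2 := by ring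
  rw [this, homg2, Complex.I_sq]

lemma hrt2 : rt2 = omg - omg ^ 3 := by
  have h3 : omg ^ 3 = omg ^ 2 * omg := by ring
  rw [h3, homg2, homg]
  have := Complex.I_sq
  ring_nf
  linear_combination (rt2/2) * this

lemma hconj : (starRingEnd ℂ) omg = -omg ^ 3 := by
  have h3 : omg ^ 3 = omg ^ 2 * omg := by ring
  rw [h3, homg2, homg]
  simp [map_mul, map_add, map_div₀, Complex.conj_I, rt2, map_ofNat]
  linear_combination ((((Real.sqrt 2 : ℝ):ℂ))/2) * Complex.I_sq




lemma Zomega.add {u v : ℂ} (hu : Zomega u) (hv : Zomega v) : Zomega (u + v) := by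
  obtain ⟨a, b, c, d, rfl⟩ := hu
  obtain ⟨a', b', c', d', rfl⟩ := hv
  exact ⟨a + a', b + b', c + c', d + d', by push_cast; ring⟩

lemma Zomega.mul {u v : ℂ} (hu : Zomega u) (hv : Zomega v) : Zomega (u * v) := by
  obtain ⟨a, b, c, d, rfl⟩ := hu
  obtain ⟨a', b', c', d', rfl⟩ := hv
  refine ⟨a*a' - b*d' - c*c' - d*b', a*b' + b*a' - c*d' - d*c',
    a*c' + b*b' + c*a' - d*d', a*d' + b*c' + c*b' + d*a', ?_⟩
  push_cast
  linear_combination ((b:ℂ)*d' + c*c' + d*b' + (c*d' + d*c')*omg + d*d'*omg^2) * h4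

lemma Zomega.conj {u : ℂ} (hu : Zomega u) : Zomega ((starRingEnd ℂ) u) := by
  obtain ⟨a, b, c, d, rfl⟩ := hu
  refine ⟨a, -d, -c, -b, ?_⟩
  simp only [map_add, map_mul, map_pow, map_intCast, hconj]
  push_cast
  linear_combination ((c:ℂ)*omg^2 - d*omg*(omg^4 - 1)) * h4

lemma Zomega.intCast (n : ℤ) : Zomega (n : ℂ) := ⟨n, 0, 0, 0, by push_cast; ring⟩

lemma Zomega.one : Zomega 1 := by simpa using Zomega.intCast 1

lemma Zomega_rt2 : Zomega rt2 := ⟨0, 1, 0, -1, by rw [hrt2]; push_cast; ring⟩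

lemma Zomega_rt2pow (n : ℕ) : Zomega (rt2 ^ n) := by
  induction n with
  | zero => simpa using Zomega.one
  | succ k ih => rw [pow_succ]; exact ih.mul Zomega_rt2

lemma coords_zero {a b c d : ℤ}
    (h : (a:ℂ) + b * omg + c * omg ^ 2 + d * omg ^ 3 = 0) :
    a = 0 ∧ b = 0 ∧ c = 0 ∧ d = 0 := by
  set s : ℝ := Real.sqrt 2 / 2 with hs
  have homg' : omg = (s:ℂ) + s * I := by
    rw [homg, rt2, hs]; push_cast; ring
  have h3 : omg ^ 3 = -(s:ℂ) + s * I := by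
    have : omg ^ 3 = omg ^ 2 * omg := by ring
    rw [this, homg2, homg']
    linear_combination ((s:ℂ)) * Complex.I_sq
  rw [homg2, h3, homg'] at h
  have hre : (a:ℝ) + b * s - d * s = 0 := by
    have := congrArg Complex.re h
    simp at this
    linarith
  have him : (c:ℝ) + b * s + d * s = 0 := by
    have := congrArg Complex.im h
    simp at this
    linarith
  have hirr : Irrational (Real.sqrt 2) := irrational_sqrt_two
  have key : ∀ p q : ℤ, (p:ℝ) + q * s = 0 → p = 0 ∧ q = 0 := by
    intro p q hpq
    by_cases hq : q = 0
    · subst hq; simp at hpq; exact ⟨by exact_mod_cast hpq, rfl⟩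
    · exfalso
      have hs2 : Real.sqrt 2 = ((-2 * p : ℤ):ℝ) / ((q : ℤ):ℝ) := by
        have hq' : (q:ℝ) ≠ 0 := Int.cast_ne_zero.mpr hq
        rw [eq_div_iff hq']
        push_cast
        rw [hs] at hpq
        linarith
      have : Irrational (((-2 * p : ℤ):ℝ) / ((q : ℤ):ℝ)) := hs2 ▸ hirr
      rw [show ((-2 * p : ℤ):ℝ) / ((q : ℤ):ℝ) = ((((-2 * p : ℤ):ℚ) / ((q : ℤ):ℚ) : ℚ) : ℝ) by push_cast; ring] at this
      exact this ⟨_, rfl⟩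
  have h1 := key a (b - d) (by push_cast; linarith)
  have h2 := key c (b + d) (by push_cast; linarith)
  refine ⟨h1.1, ?_, h2.1, ?_⟩ <;> omega

lemma coords_inj {a b c d a' b' c' d' : ℤ}
    (h : (a:ℂ) + b * omg + c * omg ^ 2 + d * omg ^ 3
       = (a':ℂ) + b' * omg + c' * omg ^ 2 + d' * omg ^ 3) :
    a = a' ∧ b = b' ∧ c = c' ∧ d = d' := by
  have := coords_zero (a := a - a') (b := b - b') (c := c - c') (d := d - d')
    (by push_cast; linear_combination h)
  omega

def lam : ℂ := 1 - omg

def LDvd (z : ℂ) : Prop := ∃ q : ℂ, Zomega q ∧ z = lam * q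

lemma lam_ne : lam ≠ 0 := by
  rw [lam, sub_ne_zero]
  intro h
  have := h4
  rw [← h] at this
  norm_num at this

lemma conj_lam : (starRingEnd ℂ) lam = omg ^ 3 * lam := by
  rw [lam]
  simp only [map_sub, map_one, hconj]
  linear_combination h4

lemma lam_sq : lam ^ 2 = rt2 * (-1 + omg - omg ^ 2) := by
  rw [lam, hrt2]
  linear_combination (1 - omg) * h4

lemma lam_mul_conj_lam : lam * (starRingEnd ℂ) lam = rt2 * (rt2 - 1) := by
  rw [conj_lam, lam, hrt2]
  linear_combination (omg - omg^2) * h4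

lemma rt2_eq_lam_mul : rt2 = lam * (omg + omg ^ 2) := by
  rw [lam, hrt2]; ring

lemma u1_unit : (rt2 - 1) * (rt2 + 1) = 1 := by
  linear_combination rt2_sq

lemma Zomega_u1 : Zomega (rt2 - 1) := ⟨-1, 1, 0, -1, by rw [hrt2]; push_cast; ring⟩

lemma Zomega_u1inv : Zomega (rt2 + 1) := ⟨1, 1, 0, -1, by rw [hrt2]; push_cast; ring⟩

/-- if the coordinate sum is even, λ divides. -/
lemma lam_dvd_coords {z : ℂ} {a b c d : ℤ}
    (hz : z = (a:ℂ) + b * omg + c * omg ^ 2 + d * omg ^ 3)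
    (he : Even (a + b + c + d)) : LDvd z := by
  obtain ⟨t, ht⟩ := he
  -- s = t, r = t - d, q = t - d - c, p = t - d - c - b
  refine ⟨(t - d - c - b : ℤ) + (t - d - c : ℤ) * omg + (t - d : ℤ) * omg ^ 2 + (t : ℤ) * omg ^ 3,
    ⟨_, _, _, _, rfl⟩, ?_⟩
  rw [hz, lam]
  have ha : (a : ℂ) = (t:ℂ) + t - b - c - d := by norm_cast; omega
  rw [ha]
  push_cast
  linear_combination ((t:ℂ)) * h4

/-- if λ divides, the coordinate sum is even. -/
lemma even_of_lam_dvd {z : ℂ} {a b c d : ℤ}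
    (hz : z = (a:ℂ) + b * omg + c * omg ^ 2 + d * omg ^ 3)
    (h : LDvd z) : Even (a + b + c + d) := by
  obtain ⟨q, ⟨p, qq, r, sS, rfl⟩, he⟩ := h
  rw [hz] at he
  have : (a:ℂ) + b * omg + c * omg ^ 2 + d * omg ^ 3
      = ((p + sS : ℤ):ℂ) + ((qq - p : ℤ):ℂ) * omg + ((r - qq : ℤ):ℂ) * omg ^ 2 + ((sS - r : ℤ):ℂ) * omg ^ 3 := by
    rw [he, lam]
    push_cast
    linear_combination (-(sS:ℂ)) * h4
  obtain ⟨e1, e2, e3, e4⟩ := coords_inj this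
  exact ⟨sS, by omega⟩

lemma lam_prime {u v : ℂ} (hu : Zomega u) (hv : Zomega v) (h : LDvd (u * v)) :
    LDvd u ∨ LDvd v := by
  obtain ⟨a, b, c, d, hu'⟩ := hu
  obtain ⟨a', b', c', d', hv'⟩ := hv
  by_cases h1 : Even (a + b + c + d)
  · exact Or.inl (lam_dvd_coords hu' h1)
  by_cases h2 : Even (a' + b' + c' + d')
  · exact Or.inr (lam_dvd_coords hv' h2)
  exfalso
  have hmul : u * v = ((a*a' - b*d' - c*c' - d*b' : ℤ):ℂ)
      + ((a*b' + b*a' - c*d' - d*c' : ℤ):ℂ) * omg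
      + ((a*c' + b*b' + c*a' - d*d' : ℤ):ℂ) * omg ^ 2
      + ((a*d' + b*c' + c*b' + d*a' : ℤ):ℂ) * omg ^ 3 := by
    rw [hu', hv']
    push_cast
    linear_combination ((b:ℂ)*d' + c*c' + d*b' + (c*d' + d*c')*omg + d*d'*omg^2) * h4
  have hev := even_of_lam_dvd hmul h
  have hodd : Odd ((a*a' - b*d' - c*c' - d*b') + (a*b' + b*a' - c*d' - d*c')
      + (a*c' + b*b' + c*a' - d*d') + (a*d' + b*c' + c*b' + d*a')) := by
    have key : (a*a' - b*d' - c*c' - d*b') + (a*b' + b*a' - c*d' - d*c')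
      + (a*c' + b*b' + c*a' - d*d') + (a*d' + b*c' + c*b' + d*a')
      = (a+b+c+d) * (a'+b'+c'+d') - 2*(b*d' + c*c' + d*b' + c*d' + d*c' + d*d') := by ring
    rw [key]
    rw [Int.not_even_iff_odd] at h1 h2
    exact (h1.mul h2).sub_even ⟨_, two_mul _⟩
  rw [← Int.not_odd_iff_even] at hev
  exact hev hodd

lemma lam_dvd_conj {z : ℂ} (h : LDvd z) : LDvd ((starRingEnd ℂ) z) := by
  obtain ⟨q, hq, rfl⟩ := h
  refine ⟨omg ^ 3 * (starRingEnd ℂ) q, ?_, ?_⟩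
  · exact Zomega.mul ⟨0,0,0,1, by push_cast; ring⟩ hq.conj
  · rw [map_mul, conj_lam]; ring

lemma sqrt2_dvd_imp_lam_dvd {z : ℂ} (h : ZDvd rt2 z) : LDvd z := by
  obtain ⟨q, hq, rfl⟩ := h
  exact ⟨(omg + omg ^ 2) * q, Zomega.mul ⟨0,1,1,0, by push_cast; ring⟩ hq,
    by rw [rt2_eq_lam_mul]; ring⟩

lemma lam_dvd_self_of_conj {x : ℂ} (hx : Zomega x) (h : LDvd (x * (starRingEnd ℂ) x)) :
    LDvd x := by
  rcases lam_prime hx hx.conj h with h' | h'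
  · exact h'
  · have := lam_dvd_conj h'
    rwa [Complex.conj_conj] at this

lemma ZDvd_mono {m n : ℕ} (h : m ≤ n) {z : ℂ} (hd : ZDvd (rt2 ^ n) z) : ZDvd (rt2 ^ m) z := by
  obtain ⟨q, hq, rfl⟩ := hd
  exact ⟨rt2 ^ (n - m) * q, (Zomega_rt2pow _).mul hq,
    by rw [← mul_assoc, ← pow_add, Nat.add_sub_cancel' h]⟩

lemma conj_rt2 : (starRingEnd ℂ) rt2 = rt2 := by
  rw [rt2]; exact Complex.conj_ofReal _

lemma gde_shift {j k : ℕ} {u uinv w : ℂ} (hu : Zomega u) (huinv : Zomega uinv)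
    (huu : uinv * u = 1) (hw : Zomega w) (h : IsGde rt2 (rt2 ^ j * (u * w)) k) :
    j ≤ k ∧ IsGde rt2 w (k - j) := by
  have hjk : j ≤ k := by
    by_contra hc
    exact h.2 (ZDvd_mono (by omega) ⟨u * w, hu.mul hw, rfl⟩)
  refine ⟨hjk, ⟨?_, ?_⟩⟩
  · obtain ⟨q, hq, he⟩ := h.1
    refine ⟨uinv * q, huinv.mul hq, ?_⟩
    have hne : (rt2 : ℂ) ^ j ≠ 0 := pow_ne_zero _ rt2_ne
    have : rt2 ^ j * (u * w) = rt2 ^ j * (rt2 ^ (k - j) * q) := by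
      rw [he, ← mul_assoc, ← pow_add, Nat.add_sub_cancel' hjk]
    have h2 : u * w = rt2 ^ (k - j) * q := mul_left_cancel₀ hne this
    calc w = uinv * (u * w) := by rw [← mul_assoc, huu, one_mul]
    _ = rt2 ^ (k - j) * (uinv * q) := by rw [h2]; ring
  · intro ⟨q, hq, he⟩
    refine h.2 ⟨u * q, hu.mul hq, ?_⟩
    rw [he]
    have hpow : rt2 ^ j * rt2 ^ (k - j + 1) = rt2 ^ (k + 1) := by
      rw [← pow_add]; congr 1; omega
    calc rt2 ^ j * (u * (rt2 ^ (k - j + 1) * q)) = rt2 ^ j * rt2 ^ (k - j + 1) * (u * q) := by ring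
      _ = rt2 ^ (k + 1) * (u * q) := by rw [hpow]

lemma step_lam {x : ℂ} (hx : Zomega x) {k : ℕ} (hk1 : 1 ≤ k)
    (hk : IsGde rt2 (x * (starRingEnd ℂ) x) k) :
    ∃ x', Zomega x' ∧ x = lam * x' ∧ IsGde rt2 (x' * (starRingEnd ℂ) x') (k - 1) := by
  have h1 : ZDvd rt2 (x * (starRingEnd ℂ) x) := by
    have := ZDvd_mono hk1 hk.1
    rwa [pow_one] at this
  obtain ⟨x', hx', rfl⟩ := lam_dvd_self_of_conj hx (sqrt2_dvd_imp_lam_dvd h1)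
  have heq : lam * x' * (starRingEnd ℂ) (lam * x')
      = rt2 ^ 1 * ((rt2 - 1) * (x' * (starRingEnd ℂ) x')) := by
    rw [map_mul, pow_one]
    linear_combination (x' * (starRingEnd ℂ) x') * lam_mul_conj_lam
  rw [heq] at hk
  exact ⟨x', hx', rfl, (gde_shift Zomega_u1 Zomega_u1inv
    (by linear_combination u1_unit) (hx'.mul hx'.conj) hk).2⟩

lemma step_rt2 {x : ℂ} (hx : Zomega x) {k : ℕ} (hk2 : 2 ≤ k)
    (hk : IsGde rt2 (x * (starRingEnd ℂ) x) k) :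
    ∃ x', Zomega x' ∧ x = rt2 * x' ∧ IsGde rt2 (x' * (starRingEnd ℂ) x') (k - 2) := by
  obtain ⟨x1, hx1, rfl, hk1⟩ := step_lam hx (by omega) hk
  obtain ⟨x2, hx2, he2, _⟩ := step_lam hx1 (by omega) hk1
  subst he2
  refine ⟨(-1 + omg - omg ^ 2) * x2, Zomega.mul ⟨-1, 1, -1, 0, by push_cast; ring⟩ hx2, ?_, ?_⟩
  · rw [← mul_assoc, ← mul_assoc, ← lam_sq]; ring
  · have hX : lam * (lam * x2) = rt2 * ((-1 + omg - omg ^ 2) * x2) := by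
      rw [← mul_assoc, ← mul_assoc, ← lam_sq]; ring
    rw [hX] at hk
    have heq : rt2 * ((-1 + omg - omg ^ 2) * x2)
        * (starRingEnd ℂ) (rt2 * ((-1 + omg - omg ^ 2) * x2))
        = rt2 ^ 2 * ((1:ℂ) * (((-1 + omg - omg ^ 2) * x2)
          * (starRingEnd ℂ) ((-1 + omg - omg ^ 2) * x2))) := by
      rw [map_mul, conj_rt2]; ring
    rw [heq] at hk
    have hmu : Zomega ((-1 + omg - omg ^ 2) * x2) :=
      Zomega.mul ⟨-1, 1, -1, 0, by push_cast; ring⟩ hx2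
    exact (gde_shift Zomega.one Zomega.one (one_mul 1) (hmu.mul hmu.conj) hk).2

lemma re_half (w : ℂ) : ((w.re : ℝ) : ℂ) = (w + (starRingEnd ℂ) w) / 2 := by
  rw [Complex.add_conj]; push_cast; ring

lemma re_factor {u z : ℂ} (hu : (starRingEnd ℂ) u = u) :
    (((u * z).re : ℝ) : ℂ) = u * ((z.re : ℝ) : ℂ) := by
  rw [re_half, re_half, map_mul, hu]; ring

lemma conj_coords (a b c d : ℤ) :
    (starRingEnd ℂ) ((a:ℂ) + b * omg + c * omg ^ 2 + d * omg ^ 3)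
      = (a:ℂ) + (-d : ℤ) * omg + (-c : ℤ) * omg ^ 2 + (-b : ℤ) * omg ^ 3 := by
  simp only [map_add, map_mul, map_pow, map_intCast, hconj]
  push_cast
  linear_combination ((c:ℂ)*omg^2 - d*omg*(omg^4 - 1)) * h4

lemma R_eq {t : ℂ} {a b c d : ℤ}
    (ht : t = (a:ℂ) + b * omg + c * omg ^ 2 + d * omg ^ 3) :
    (((rt2 * t).re : ℝ) : ℂ) = ((b - d : ℤ):ℂ) + (a:ℂ) * rt2 := by
  rw [re_half, map_mul, conj_rt2, ht, conj_coords, hrt2]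
  push_cast
  linear_combination (((b:ℂ) - d) * (omg^2 - 2) / 2) * h4

lemma R_Zomega {x y : ℂ} (hx : Zomega x) (hy : Zomega y) :
    Zomega (((rt2 * x * (starRingEnd ℂ) y).re : ℝ) : ℂ) := by
  obtain ⟨a, b, c, d, ht⟩ := hx.mul hy.conj
  rw [mul_assoc]
  rw [R_eq ht]
  exact ⟨b - d, a, 0, -a, by rw [hrt2]; push_cast; ring⟩

lemma main_div : ∀ n : ℕ, ∀ x y : ℂ, Zomega x → Zomega y → ∀ kx ky : ℕ,
    IsGde rt2 (x * (starRingEnd ℂ) x) kx → IsGde rt2 (y * (starRingEnd ℂ) y) ky →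
    kx + ky = n →
    ZDvd (rt2 ^ ((kx + ky) / 2)) (((rt2 * x * (starRingEnd ℂ) y).re : ℝ) : ℂ) := by
  intro n
  induction n using Nat.strong_induction_on with
  | _ n ih =>
    intro x y hx hy kx ky hkx hky hn
    by_cases hc1 : 1 ≤ kx ∧ 1 ≤ ky
    · -- both at least 1 : extract lam from each
      obtain ⟨x', hx', rfl, hkx'⟩ := step_lam hx hc1.1 hkx
      obtain ⟨y', hy', rfl, hky'⟩ := step_lam hy hc1.2 hky
      have ihr := ih (n - 2) (by omega) x' y' hx' hy' (kx - 1) (ky - 1) hkx' hky' (by omega)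
      obtain ⟨q, hq, hqe⟩ := ihr
      have hfac : rt2 * (lam * x') * (starRingEnd ℂ) (lam * y')
          = (rt2 * (rt2 - 1)) * (rt2 * x' * (starRingEnd ℂ) y') := by
        rw [map_mul]
        linear_combination (rt2 * x' * (starRingEnd ℂ) y') * lam_mul_conj_lam
      have hre : (((rt2 * (lam * x') * (starRingEnd ℂ) (lam * y')).re : ℝ) : ℂ)
          = (rt2 * (rt2 - 1)) * (((rt2 * x' * (starRingEnd ℂ) y').re : ℝ) : ℂ) := by
        rw [hfac]
        exact re_factor (by rw [map_mul, map_sub, conj_rt2, map_one])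
      rw [hre, hqe]
      refine ⟨(rt2 - 1) * q, Zomega_u1.mul hq, ?_⟩
      have hkk : (kx + ky) / 2 = (kx - 1 + (ky - 1)) / 2 + 1 := by omega
      rw [hkk, pow_succ]
      ring
    · by_cases hc2 : 2 ≤ kx
      · obtain ⟨x', hx', rfl, hkx'⟩ := step_rt2 hx hc2 hkx
        have ihr := ih (n - 2) (by omega) x' y hx' hy (kx - 2) ky hkx' hky (by omega)
        obtain ⟨q, hq, hqe⟩ := ihr
        have hre : (((rt2 * (rt2 * x') * (starRingEnd ℂ) y).re : ℝ) : ℂ)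
            = rt2 * (((rt2 * x' * (starRingEnd ℂ) y).re : ℝ) : ℂ) := by
          rw [show rt2 * (rt2 * x') * (starRingEnd ℂ) y
              = rt2 * (rt2 * x' * (starRingEnd ℂ) y) by ring]
          exact re_factor conj_rt2
        rw [hre, hqe]
        refine ⟨q, hq, ?_⟩
        have hkk : (kx + ky) / 2 = (kx - 2 + ky) / 2 + 1 := by omega
        rw [hkk, pow_succ]
        ring
      · by_cases hc3 : 2 ≤ ky
        · obtain ⟨y', hy', rfl, hky'⟩ := step_rt2 hy hc3 hky
          have ihr := ih (n - 2) (by omega) x y' hx hy' kx (ky - 2) hkx hky' (by omega)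
          obtain ⟨q, hq, hqe⟩ := ihr
          have hre : (((rt2 * x * (starRingEnd ℂ) (rt2 * y')).re : ℝ) : ℂ)
              = rt2 * (((rt2 * x * (starRingEnd ℂ) y').re : ℝ) : ℂ) := by
            rw [show rt2 * x * (starRingEnd ℂ) (rt2 * y')
                = rt2 * (rt2 * x * (starRingEnd ℂ) y') by rw [map_mul, conj_rt2]; ring]
            exact re_factor conj_rt2
          rw [hre, hqe]
          refine ⟨q, hq, ?_⟩
          have hkk : (kx + ky) / 2 = (kx + (ky - 2)) / 2 + 1 := by omega
          rw [hkk, pow_succ]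
          ring
        · -- kx + ky ≤ 1
          have h01 : (kx + ky) / 2 = 0 := by omega
          rw [h01, pow_zero]
          exact ⟨_, R_Zomega hx hy, (one_mul _).symm⟩

/-- Re(√2·x·y*) belongs to Z[ω] and
gde(Re(√2·x·y*), √2) ≥ ⌊(gde(|x|², √2) + gde(|y|², √2))/2⌋. -/
theorem stmt7 (x y : ℂ) (hx : Zomega x) (hy : Zomega y)
    (hx0 : x ≠ 0) (hy0 : y ≠ 0) (kx ky : ℕ)
    (hkx : IsGde rt2 (x * (starRingEnd ℂ) x) kx)
    (hky : IsGde rt2 (y * (starRingEnd ℂ) y) ky) :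
    Zomega (((rt2 * x * (starRingEnd ℂ) y).re : ℝ) : ℂ) ∧
      ZDvd (rt2 ^ ((kx + ky) / 2)) (((rt2 * x * (starRingEnd ℂ) y).re : ℝ) : ℂ) :=
  ⟨R_Zomega hx hy, main_div (kx + ky) x y hx hy kx ky hkx hky rfl⟩
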